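/- For every q ∈ (0,1), the series Σ_{n=1}^∞ ([2n−1]·[2n+1])^{−1} · Σ_{k=0}^{2n−1} [2n−k]·[k] converges and its sum equals q²·(1−q²)^{−2}. (Equivalently, the index pairing of the paper, q^{−2}(1−q²)²·Σ_{l ∈ ℕ₀+1/2} Σ_{m=−l}^{l} [l−m+1]·[l+m]/([2l]·[2l+2]), equals 1.) -/

import Mathlib

noncomputable section

namespace Podles

/-- The `q`-number `[x] = (q^x - q^(-x))/(q - q⁻¹)`. -/
def qn (q x : ℝ) : ℝ := (q ^ x - q ^ (-x)) / (q - q⁻¹)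

namespace Aux18

variable {q : ℝ}

lemma qn_nat (hq0 : 0 < q) (j : ℕ) :
    qn q (j : ℝ) = (q ^ j - (q ^ j)⁻¹) / (q - q⁻¹) := by
  rw [qn, Real.rpow_neg hq0.le, Real.rpow_natCast]

lemma c_neg (hq0 : 0 < q) (hq1 : q < 1) : q - q⁻¹ < 0 := by
  have h := mul_inv_cancel₀ hq0.ne'
  nlinarith

lemma g_neg (hq0 : 0 < q) (hq1 : q < 1) {j : ℕ} (hj : j ≠ 0) :
    q ^ j - (q ^ j)⁻¹ < 0 := by
  have h1 : q ^ j < 1 := pow_lt_one₀ hq0.le hq1 hj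
  have h2 : 0 < q ^ j := pow_pos hq0 j
  have h := mul_inv_cancel₀ h2.ne'
  nlinarith

lemma g_nonpos (hq0 : 0 < q) (hq1 : q < 1) (j : ℕ) :
    q ^ j - (q ^ j)⁻¹ ≤ 0 := by
  rcases Nat.eq_zero_or_pos j with h | h
  · simp [h]
  · exact (g_neg hq0 hq1 h.ne').le

/-- Closed form for the inner convolution sum. -/
lemma sum_eval (hq0 : 0 < q) (hq1 : q < 1) (m : ℕ) :
    ∑ k ∈ Finset.range m, ((q ^ (m - k) - (q ^ (m - k))⁻¹) * (q ^ k - (q ^ k)⁻¹))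
      = (m : ℝ) * (q ^ m + (q ^ m)⁻¹)
        - q ^ m * ((((q ^ m) ^ 2)⁻¹ - 1) / ((q ^ 2)⁻¹ - 1))
        - (q ^ m)⁻¹ * (((q ^ m) ^ 2 - 1) / (q ^ 2 - 1)) := by
  have hqne : q ≠ 0 := hq0.ne'
  have hq2 : q ^ 2 ≠ 1 := by nlinarith [sq_nonneg q]
  have hq2' : (q ^ 2)⁻¹ ≠ 1 := by
    simp only [ne_eq, inv_eq_one]; exact hq2
  have h1 : ∀ k ∈ Finset.range m,
      (q ^ (m - k) - (q ^ (m - k))⁻¹) * (q ^ k - (q ^ k)⁻¹)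
        = (q ^ m + (q ^ m)⁻¹) - q ^ m * ((q ^ 2)⁻¹) ^ k - (q ^ m)⁻¹ * (q ^ 2) ^ k := by
    intro k hk
    have hk' : k ≤ m := (Finset.mem_range.mp hk).le
    rw [pow_sub₀ q hqne hk']
    have hA : q ^ m ≠ 0 := pow_ne_zero _ hqne
    have hB : q ^ k ≠ 0 := pow_ne_zero _ hqne
    have e2 : (q ^ 2) ^ k = (q ^ k) ^ 2 := by ring
    rw [inv_pow, e2]
    field_simp
    ring
  rw [Finset.sum_congr rfl h1]
  rw [Finset.sum_sub_distrib, Finset.sum_sub_distrib, Finset.sum_const, ← Finset.mul_sum,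
    ← Finset.mul_sum, geom_sum_eq hq2', geom_sum_eq hq2]
  have e3 : ((q ^ 2)⁻¹) ^ m = ((q ^ m) ^ 2)⁻¹ := by
    rw [inv_pow, ← pow_mul, ← pow_mul, Nat.mul_comm]
  have e4 : (q ^ 2) ^ m = (q ^ m) ^ 2 := by
    rw [← pow_mul, ← pow_mul, Nat.mul_comm]
  rw [e3, e4, nsmul_eq_mul, Finset.card_range]

end Aux18

set_option maxHeartbeats 2000000 in
/-- `Σ_{n≥1} ([2n−1][2n+1])⁻¹ Σ_{k=0}^{2n−1} [2n−k][k] = q²(1−q²)⁻²`. -/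
theorem statement18 (q : ℝ) (hq0 : 0 < q) (hq1 : q < 1) :
    HasSum
      (fun n : ℕ =>
        (qn q (2 * (n : ℝ) + 1) * qn q (2 * (n : ℝ) + 3))⁻¹ *
          ∑ k ∈ Finset.range (2 * n + 2), qn q (2 * (n : ℝ) + 2 - (k : ℝ)) * qn q (k : ℝ))
      (q ^ 2 * ((1 - q ^ 2) ^ 2)⁻¹) := by
  have hqne : q ≠ 0 := hq0.ne'
  have hc : q - q⁻¹ ≠ 0 := (Aux18.c_neg hq0 hq1).ne
  have hq2 : (1 : ℝ) - q ^ 2 ≠ 0 := by nlinarith [sq_nonneg q]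
  -- the telescoping sequence
  set b : ℕ → ℝ := fun n =>
    q ^ 2 * (2 * (n : ℝ) + 1) * (q - q⁻¹) /
      ((1 - q ^ 2) ^ 2 * (q ^ (2 * n + 1) - (q ^ (2 * n + 1))⁻¹)) with hb
  -- rewrite the summand in closed form and telescope
  have key : ∀ n : ℕ,
      (qn q (2 * (n : ℝ) + 1) * qn q (2 * (n : ℝ) + 3))⁻¹ *
          (∑ k ∈ Finset.range (2 * n + 2), qn q (2 * (n : ℝ) + 2 - (k : ℝ)) * qn q (k : ℝ))
        = b n - b (n + 1) := by
    intro n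
    have e1 : (2 * (n : ℝ) + 1) = ((2 * n + 1 : ℕ) : ℝ) := by push_cast; ring
    have e3 : (2 * (n : ℝ) + 3) = ((2 * n + 3 : ℕ) : ℝ) := by push_cast; ring
    have hsum : ∑ k ∈ Finset.range (2 * n + 2), qn q (2 * (n : ℝ) + 2 - (k : ℝ)) * qn q (k : ℝ)
        = (∑ k ∈ Finset.range (2 * n + 2),
            ((q ^ (2 * n + 2 - k) - (q ^ (2 * n + 2 - k))⁻¹) * (q ^ k - (q ^ k)⁻¹))) /
          ((q - q⁻¹) * (q - q⁻¹)) := by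
      rw [Finset.sum_div]
      refine Finset.sum_congr rfl fun k hk => ?_
      have hk' : k ≤ 2 * n + 2 := (Finset.mem_range.mp hk).le
      have e2 : (2 * (n : ℝ) + 2 - (k : ℝ)) = ((2 * n + 2 - k : ℕ) : ℝ) := by
        rw [Nat.cast_sub hk']; push_cast; ring
      rw [e2, Aux18.qn_nat hq0, Aux18.qn_nat hq0, div_mul_div_comm]
    rw [e1, e3, Aux18.qn_nat hq0, Aux18.qn_nat hq0, hsum,
      Aux18.sum_eval hq0 hq1 (2 * n + 2)]
    simp only [hb]
    have hg1 : q ^ (2 * n + 1) - (q ^ (2 * n + 1))⁻¹ ≠ 0 :=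
      (Aux18.g_neg hq0 hq1 (by omega)).ne
    have hg3 : q ^ (2 * n + 3) - (q ^ (2 * n + 3))⁻¹ ≠ 0 :=
      (Aux18.g_neg hq0 hq1 (by omega)).ne
    have hg1' : q ^ (2 * (n + 1) + 1) - (q ^ (2 * (n + 1) + 1))⁻¹ ≠ 0 :=
      (Aux18.g_neg hq0 hq1 (by omega)).ne
    have hP : q ^ n ≠ 0 := pow_ne_zero _ hqne
    have p1 : q ^ (2 * n + 1) = (q ^ n) ^ 2 * q := by ring
    have p2 : q ^ (2 * n + 2) = (q ^ n) ^ 2 * q ^ 2 := by ring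
    have p3 : q ^ (2 * n + 3) = (q ^ n) ^ 2 * q ^ 3 := by ring
    have p4 : q ^ (2 * (n + 1) + 1) = (q ^ n) ^ 2 * q ^ 3 := by ring
    have ecast : ((2 * n + 2 : ℕ) : ℝ) = 2 * (n : ℝ) + 2 := by push_cast; ring
    rw [p1] at hg1; rw [p3] at hg3
    rw [p1, p2, p3, p4, ecast]
    push_cast
    generalize hgen : q ^ n = P at hg1 hg3 hP ⊢
    have hq2i : (q ^ 2)⁻¹ - 1 ≠ 0 := by
      have : (q ^ 2)⁻¹ ≠ 1 := by simp only [ne_eq, inv_eq_one]; nlinarith [sq_nonneg q]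
      intro h; exact this (by linarith [sub_eq_zero.mp h])
    have hq2m : q ^ 2 - 1 ≠ 0 := by intro h; exact hq2 (by linarith [sub_eq_zero.mp h])
    have r1 : P ^ 2 * q - (P ^ 2 * q)⁻¹ = (P ^ 4 * q ^ 2 - 1) / (P ^ 2 * q) := by
      field_simp
    have r3 : P ^ 2 * q ^ 3 - (P ^ 2 * q ^ 3)⁻¹ = (P ^ 4 * q ^ 6 - 1) / (P ^ 2 * q ^ 3) := by
      field_simp
    have r4 : (q ^ 2)⁻¹ - 1 = (1 - q ^ 2) / q ^ 2 := by field_simp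
    have rc : q - q⁻¹ = (q ^ 2 - 1) / q := by field_simp
    have hG1 : P ^ 4 * q ^ 2 - 1 ≠ 0 := by
      rw [r1] at hg1
      exact (div_ne_zero_iff.mp hg1).1
    have hG3 : P ^ 4 * q ^ 6 - 1 ≠ 0 := by
      rw [r3] at hg3
      exact (div_ne_zero_iff.mp hg3).1
    rw [r1, r3, r4, rc]
    field_simp
    ring
  have hb0 : b 0 = q ^ 2 * ((1 - q ^ 2) ^ 2)⁻¹ := by
    simp only [hb, Nat.cast_zero, mul_zero, zero_add, Nat.mul_zero, Nat.zero_add, pow_one,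
      mul_one]
    rw [mul_div_mul_right _ _ hc, div_eq_mul_inv]
  -- nonnegativity of the summand
  have hnonneg : ∀ n : ℕ,
      0 ≤ (qn q (2 * (n : ℝ) + 1) * qn q (2 * (n : ℝ) + 3))⁻¹ *
          ∑ k ∈ Finset.range (2 * n + 2), qn q (2 * (n : ℝ) + 2 - (k : ℝ)) * qn q (k : ℝ) := by
    intro n
    have hqn : ∀ x : ℝ, 0 ≤ x → 0 ≤ qn q x := by
      intro x hx
      have h1 : q ^ x ≤ q ^ (-x) :=
        Real.rpow_le_rpow_of_exponent_ge hq0 hq1.le (by linarith)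
      have : q ^ x - q ^ (-x) ≤ 0 := by linarith
      exact div_nonneg_iff.mpr (Or.inr ⟨this, (Aux18.c_neg hq0 hq1).le⟩)
    refine mul_nonneg (inv_nonneg.mpr (mul_nonneg ?_ ?_)) ?_
    · exact hqn _ (by positivity)
    · exact hqn _ (by positivity)
    · refine Finset.sum_nonneg fun k hk => ?_
      have hk' : (k : ℝ) ≤ 2 * n + 1 := by
        have := Finset.mem_range.mp hk
        have : (k : ℝ) ≤ (2 * n + 1 : ℕ) := by exact_mod_cast Nat.lt_succ_iff.mp this
        push_cast at this; linarith
      exact mul_nonneg (hqn _ (by linarith)) (hqn _ (Nat.cast_nonneg k))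
  -- limit of b
  have hblim : Filter.Tendsto b Filter.atTop (nhds 0) := by
    have hrw : ∀ n : ℕ, b n =
        (q ^ 2 * (q - q⁻¹) / (1 - q ^ 2) ^ 2) * ((2 * (n : ℝ) + 1) * (q * (q ^ 2) ^ n)) /
          ((q * (q ^ 2) ^ n) ^ 2 - 1) := by
      intro n
      simp only [hb]
      have p1 : q ^ (2 * n + 1) = q * (q ^ 2) ^ n := by ring
      rw [p1]
      have hx : q * (q ^ 2) ^ n ≠ 0 := by positivity
      field_simp
    rw [funext hrw]
    have hq2lt : q ^ 2 < 1 := by nlinarith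
    have hq2pos : (0 : ℝ) ≤ q ^ 2 := sq_nonneg q
    have hgeo : Filter.Tendsto (fun n : ℕ => (q ^ 2) ^ n) Filter.atTop (nhds 0) :=
      tendsto_pow_atTop_nhds_zero_of_lt_one hq2pos hq2lt
    have hnum : Filter.Tendsto
        (fun n : ℕ => (2 * (n : ℝ) + 1) * (q * (q ^ 2) ^ n)) Filter.atTop (nhds 0) := by
      have h1 : Filter.Tendsto (fun n : ℕ => (n : ℝ) * (q ^ 2) ^ n) Filter.atTop (nhds 0) :=
        tendsto_self_mul_const_pow_of_lt_one hq2pos hq2lt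
      have : (fun n : ℕ => (2 * (n : ℝ) + 1) * (q * (q ^ 2) ^ n))
          = fun n : ℕ => 2 * q * ((n : ℝ) * (q ^ 2) ^ n) + q * (q ^ 2) ^ n := by
        funext n; ring
      rw [this]
      have := ((h1.const_mul (2 * q)).add (hgeo.const_mul q))
      simpa using this
    have hden : Filter.Tendsto
        (fun n : ℕ => (q * (q ^ 2) ^ n) ^ 2 - 1) Filter.atTop (nhds (-1)) := by
      have := ((hgeo.const_mul q).pow 2).sub_const 1
      simpa using this
    have := ((hnum.const_mul (q ^ 2 * (q - q⁻¹) / (1 - q ^ 2) ^ 2)).div hden (by norm_num))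
    simp only [mul_zero, zero_div] at this; exact this
  -- assemble
  rw [hasSum_iff_tendsto_nat_of_nonneg hnonneg]
  have hps : ∀ N : ℕ, ∑ n ∈ Finset.range N,
      (qn q (2 * (n : ℝ) + 1) * qn q (2 * (n : ℝ) + 3))⁻¹ *
        (∑ k ∈ Finset.range (2 * n + 2), qn q (2 * (n : ℝ) + 2 - (k : ℝ)) * qn q (k : ℝ))
      = b 0 - b N := by
    intro N
    rw [Finset.sum_congr rfl fun n _ => key n]
    exact Finset.sum_range_sub' b N
  simp only [hps]
  rw [show q ^ 2 * ((1 - q ^ 2) ^ 2)⁻¹ = b 0 - 0 by rw [hb0, sub_zero]]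
  exact Filter.Tendsto.const_sub (b 0) hblim

end Podles
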